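/- SOTA homomorphic matrix multiplication correctness: let A be a d_out × d_in matrix with d_out dividing d_in, and B a d_in × m matrix with m ≤ d_in. Form the square matrix Ā of order d_in by vertically stacking d_in/d_out copies of A, and B̄ of order d_in by padding B with d_in − m zero columns. Define Ā^(o) = ξ^(o−1)(σ(Ā)) and B̄^(o) = ψ^(o−1)(τ(B̄)) for o = 1,...,d_out, and H = Σ_{o=1}^{d_out} Ā^(o) ⊙ B̄^(o). Split H vertically into d_in/d_out blocks of d_out rows and let H̃ be their sum. Then AB = H̃[1:d_out, 1:m] (the first m columns of H̃). -/
import Mathlib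


open Matrix BigOperators

lemma sota_block_lt {dout din : ℕ} (hdvd : dout ∣ din) (b : Fin (din / dout)) (j : Fin dout) :
    b.val * dout + j.val < din := by
  have h1 : b.val * dout + j.val < (b.val + 1) * dout := by
    rw [Nat.add_mul, one_mul]; exact Nat.add_lt_add_left j.isLt _
  have h2 : (b.val + 1) * dout ≤ (din / dout) * dout := Nat.mul_le_mul_right _ b.isLt
  have h3 : (din / dout) * dout = din := Nat.div_mul_cancel hdvd
  omega

/-- Correctness of the SOTA homomorphic matrix multiplication method: with `d_out`
dividing `d_in` and `m ≤ d_in`, let `Ā` stack `d_in/d_out` copies of `A` into a square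
matrix of order `d_in`, let `B̄` pad `B` with zero columns, let
`H = Σ_{o} ξ^(o-1)(σ(Ā)) ⊙ ψ^(o-1)(τ(B̄))`, and let `H̃` be the sum of the
`d_in/d_out` vertical blocks of `H` of `d_out` rows each.  Then `AB` is the matrix of
the first `m` columns of `H̃`. -/
theorem sota_matmul_correctness (dout din m : ℕ) (hpos : 0 < dout)
    (hdvd : dout ∣ din) (hm : m ≤ din)
    (A : Matrix (Fin dout) (Fin din) ℝ) (B : Matrix (Fin din) (Fin m) ℝ)
    (Abar Bbar H : Matrix (Fin din) (Fin din) ℝ)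
    (hAbar : ∀ j k, Abar j k = A ⟨j.val % dout, Nat.mod_lt _ hpos⟩ k)
    (hBbar : ∀ j k, Bbar j k = if h : k.val < m then B j ⟨k.val, h⟩ else 0)
    (hH : ∀ j k, H j k =
      ∑ o : Fin dout,
        Abar j ⟨(j.val + k.val + o.val) % din, Nat.mod_lt _ j.pos⟩ *
        Bbar ⟨(j.val + k.val + o.val) % din, Nat.mod_lt _ j.pos⟩ k) :
    ∀ (j : Fin dout) (k : Fin m),
      (A * B) j k =
        ∑ b : Fin (din / dout),
          H ⟨b.val * dout + j.val, sota_block_lt hdvd b j⟩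
            ⟨k.val, lt_of_lt_of_le k.isLt hm⟩ := by

  intro j k
  have hdin : 0 < din := by have := k.isLt; omega
  haveI : NeZero din := ⟨hdin.ne'⟩
  let c : Fin din := ⟨(j.val + k.val) % din, Nat.mod_lt _ hdin⟩
  let e : Fin (din / dout) × Fin dout ≃ Fin din :=
    (finProdFinEquiv.trans (finCongr (Nat.div_mul_cancel hdvd))).trans
      (Equiv.addRight c)
  simp_rw [hH, hAbar, hBbar, Matrix.mul_apply]
  rw [← Equiv.sum_comp e (fun i => A j i * B i k), Fintype.sum_prod_type]
  refine Finset.sum_congr rfl fun b _ => Finset.sum_congr rfl fun o _ => ?_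
  have hidx : (b.val * dout + j.val + k.val + o.val) % din = (e (b, o)).val := by
    show _ = (o.val + dout * b.val + (j.val + k.val) % din) % din
    rw [Nat.add_mod_mod]
    congr 1; ring
  have hrow : (b.val * dout + j.val) % dout = j.val := by
    rw [Nat.mul_comm, Nat.mul_add_mod, Nat.mod_eq_of_lt j.isLt]
  have hk : (k : ℕ) < m := k.isLt
  have he : e (b, o) = ⟨(b.val * dout + j.val + k.val + o.val) % din,
      Nat.mod_lt _ hdin⟩ := Fin.ext hidx.symm
  simp only [he, hrow, dif_pos hk]
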